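/- Let d ≥ 2 be a real number and set α = 2·ln(d)/d. If additionally 2α < 1, then 2α·ln 2 + H(2α)·ln 2 < d·α², where H is the binary entropy function (base 2). -/

import Mathlib

noncomputable def binEnt (p : ℝ) : ℝ := -p * Real.logb 2 p - (1 - p) * Real.logb 2 (1 - p)

lemma aux_entropy_ineq (x : ℝ) (hx0 : 0 < x) (hx1 : x < 1) :
    (1 - x) * (-Real.log (1 - x)) < x := by
  have h1 : 0 < 1 - x := by linarith
  have hne : (1 - x)⁻¹ ≠ 1 := by
    intro h
    have : (1 - x) = 1 := by
      field_simp at h; linarith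
    linarith
  have h := Real.log_lt_sub_one_of_pos (inv_pos.mpr h1) hne
  rw [Real.log_inv] at h
  have h2 : (1 - x)⁻¹ - 1 = x / (1 - x) := by field_simp; ring
  rw [h2] at h
  calc (1 - x) * (-Real.log (1 - x)) < (1 - x) * (x / (1 - x)) := by
        exact (mul_lt_mul_iff_right₀ h1).mpr h
    _ = x := by field_simp

theorem entropy_bound_for_alpha (d : ℝ) (hd : 2 ≤ d)
    (hsmall : 2 * (2 * Real.log d / d) < 1) :
    2 * (2 * Real.log d / d) * Real.log 2 + binEnt (2 * (2 * Real.log d / d)) * Real.log 2 <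
      d * (2 * Real.log d / d) ^ 2 := by
  have hd0 : (0:ℝ) < d := by linarith
  have hL : 0 < Real.log d := Real.log_pos (by linarith)
  set L := Real.log d with hLdef
  have h4L : 4 * L < d := by
    have h := hsmall
    rw [show 2 * (2 * L / d) = 4 * L / d by ring, div_lt_one hd0] at h
    linarith
  -- d > 4
  have hd4 : 4 < d := by
    by_contra h
    push_neg at h
    have hL1 : L < 1 := by linarith
    have hde : d < Real.exp 1 := by
      calc d = Real.exp L := (Real.exp_log hd0).symm
        _ < Real.exp 1 := Real.exp_lt_exp.mpr hL1
    have he : Real.exp 1 < 2.7182818286 := Real.exp_one_lt_d9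
    have hL2 : L < 0.68 := by linarith
    have hlog2 : (0.6931471803:ℝ) < Real.log 2 := Real.log_two_gt_d9
    have : d < 2 := by
      have : L < Real.log 2 := by linarith
      exact (Real.log_lt_log_iff hd0 (by norm_num)).mp this
    linarith
  -- key facts
  have hLgt : Real.log 2 + Real.log 2 < L := by
    have : Real.log 4 < L := Real.log_lt_log (by norm_num) hd4
    rw [show (4:ℝ) = 2 * 2 by norm_num, Real.log_mul (by norm_num) (by norm_num)] at this
    linarith
  have hlog2pos : 0 < Real.log 2 := Real.log_pos (by norm_num)
  have hlog2d9 : (0.6931471803:ℝ) < Real.log 2 := Real.log_two_gt_d9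
  -- log (2L) > 1
  have hlog2L : 1 < Real.log (2 * L) := by
    have he : Real.exp 1 < 2.7182818286 := Real.exp_one_lt_d9
    have h1 : Real.exp 1 < 2 * L := by linarith
    calc (1:ℝ) = Real.log (Real.exp 1) := (Real.log_exp 1).symm
      _ < Real.log (2 * L) := Real.log_lt_log (Real.exp_pos 1) h1
  set x := 2 * (2 * L / d) with hxdef
  have hx0 : 0 < x := by
    rw [hxdef]; positivity
  have hx1 : x < 1 := hsmall
  have hxeq : x = 4 * L / d := by rw [hxdef]; ring
  -- log x = log (4 L) - L
  have hlogx : Real.log x = Real.log 2 + Real.log (2 * L) - L := by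
    rw [hxeq, Real.log_div (by positivity) (ne_of_gt hd0),
      show (4:ℝ) * L = 2 * (2 * L) by ring,
      Real.log_mul (by norm_num) (by positivity)]
  -- RHS = x * L
  have hrhs : d * (2 * L / d) ^ 2 = x * L := by
    rw [hxeq]; field_simp; ring
  -- binEnt x * log 2 = -x * log x - (1-x) * log (1-x)
  have hbe : binEnt x * Real.log 2 = -x * Real.log x - (1 - x) * Real.log (1 - x) := by
    unfold binEnt
    rw [Real.logb, Real.logb]
    field_simp
  rw [hrhs, hbe, hlogx]
  have key : (1 - x) * (-Real.log (1 - x)) < x * Real.log (2 * L) := by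
    calc (1 - x) * (-Real.log (1 - x)) < x := aux_entropy_ineq x hx0 hx1
      _ = x * 1 := (mul_one x).symm
      _ < x * Real.log (2 * L) := by
        exact (mul_lt_mul_iff_right₀ hx0).mpr hlog2L
  nlinarith [key]
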